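/- Let 𝔐 be a class of preference models and ★ a dynamic operator closed over 𝔐, and suppose the schemata [★ψ][≤]ξ → (ψ → [≤](ψ → [★ψ]ξ)), [★ψ][<]ξ → (ψ → [<](ψ → [★ψ]ξ)), [≤][★ψ]ξ → (ψ → [★ψ][≤](ψ → ξ)), and [<][★ψ]ξ → (ψ → [★ψ][<](ψ → ξ)) are valid in 𝔇 = ⟨𝔐, ★⟩ for all ψ ∈ L_0 and ξ ∈ L_≤(★). Then for all propositional formulas φ, ψ ∈ L_0 such that 𝔇 ⊨ φ → ψ and every ξ ∈ L_≤(★), it holds that 𝔇 ⊨ [★ψ]B(ξ | φ) ↔ B([★ψ]ξ | φ). -/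

import Mathlib

inductive PForm (P : Type) : Type
  | atom : P → PForm P
  | neg  : PForm P → PForm P
  | and  : PForm P → PForm P → PForm P

inductive DForm (P : Type) : Type
  | atom  : P → DForm P
  | neg   : DForm P → DForm P
  | and   : DForm P → DForm P → DForm P
  | all   : DForm P → DForm P
  | boxLe : DForm P → DForm P
  | boxLt : DForm P → DForm P
  | dyn   : PForm P → DForm P → DForm P

structure PrefModel (P : Type) where
  W : Type
  le : W → W → Prop
  refl : ∀ w, le w w
  trans : ∀ w₁ w₂ w₃, le w₁ w₂ → le w₂ w₃ → le w₁ w₃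
  wf : WellFounded (fun w w' => le w w' ∧ ¬ le w' w)
  val : P → Set W

namespace PrefModel
variable {P : Type}
def lt (M : PrefModel P) (w w' : M.W) : Prop := M.le w w' ∧ ¬ M.le w' w
def Min (M : PrefModel P) (S : Set M.W) : Set M.W :=
  {w | w ∈ S ∧ ¬ ∃ w' ∈ S, M.le w' w ∧ ¬ M.le w w'}
end PrefModel

def psat {P : Type} (M : PrefModel P) : PForm P → M.W → Prop
  | .atom p, w => w ∈ M.val p
  | .neg φ, w => ¬ psat M φ w
  | .and φ ψ, w => psat M φ w ∧ psat M ψ w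

def pext {P : Type} (M : PrefModel P) (φ : PForm P) : Set M.W := {w | psat M φ w}

structure DynOp (P : Type) where
  rel : (M : PrefModel P) → PForm P → M.W → M.W → Prop
  refl : ∀ M φ w, rel M φ w w
  trans : ∀ M φ w₁ w₂ w₃, rel M φ w₁ w₂ → rel M φ w₂ w₃ → rel M φ w₁ w₃
  wf : ∀ M φ, WellFounded (fun w w' => rel M φ w w' ∧ ¬ rel M φ w' w)

def DynOp.apply {P : Type} (s : DynOp P) (M : PrefModel P) (φ : PForm P) : PrefModel P where
  W := M.W
  le := s.rel M φ
  refl := s.refl M φ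
  trans := s.trans M φ
  wf := s.wf M φ
  val := M.val

def DynOp.srel {P : Type} (s : DynOp P) (M : PrefModel P) (φ : PForm P) (w w' : M.W) : Prop :=
  s.rel M φ w w' ∧ ¬ s.rel M φ w' w

def PForm.toD {P : Type} : PForm P → DForm P
  | .atom p => .atom p
  | .neg φ => .neg φ.toD
  | .and φ ψ => .and φ.toD ψ.toD

namespace DForm
variable {P : Type}
def imp (ξ ψ : DForm P) : DForm P := .neg (.and ξ (.neg ψ))
def iff (ξ ψ : DForm P) : DForm P := .and (imp ξ ψ) (imp ψ ξ)
def or (ξ ψ : DForm P) : DForm P := .neg (.and (.neg ξ) (.neg ψ))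
def exi (ξ : DForm P) : DForm P := .neg (.all (.neg ξ))
def diaLt (ξ : DForm P) : DForm P := .neg (.boxLt (.neg ξ))
def mu (ξ : DForm P) : DForm P := .and ξ (.neg (diaLt ξ))
def bel (ψ χ : DForm P) : DForm P := .all (imp (mu χ) ψ)
end DForm

def dsat {P : Type} (s : DynOp P) : DForm P → (M : PrefModel P) → M.W → Prop
  | .atom p, M, w => w ∈ M.val p
  | .neg ξ, M, w => ¬ dsat s ξ M w
  | .and ξ₁ ξ₂, M, w => dsat s ξ₁ M w ∧ dsat s ξ₂ M w
  | .all ξ, M, _ => ∀ w', dsat s ξ M w'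
  | .boxLe ξ, M, w => ∀ w', M.le w' w → dsat s ξ M w'
  | .boxLt ξ, M, w => ∀ w', M.lt w' w → dsat s ξ M w'
  | .dyn φ ξ, M, w => dsat s ξ (s.apply M φ) w

def ClosedOver {P : Type} (s : DynOp P) (𝔐 : Set (PrefModel P)) : Prop :=
  ∀ M ∈ 𝔐, ∀ φ : PForm P, s.apply M φ ∈ 𝔐

lemma dsat_toD {P : Type} (s : DynOp P) (χ : PForm P) :
    ∀ (M : PrefModel P) (w : M.W), dsat s χ.toD M w ↔ psat M χ w := by
  induction χ with
  | atom p => intro M w; exact Iff.rfl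
  | neg φ ih => intro M w; exact not_congr (ih M w)
  | and φ₁ φ₂ ih1 ih2 => intro M w; exact and_congr (ih1 M w) (ih2 M w)

lemma psat_apply {P : Type} (s : DynOp P) (M : PrefModel P) (ψ χ : PForm P) (w : M.W) :
    psat (s.apply M ψ) χ w ↔ psat M χ w := by
  induction χ with
  | atom p => exact Iff.rfl
  | neg φ ih => exact not_congr ih
  | and φ₁ φ₂ ih1 ih2 => exact and_congr ih1 ih2

lemma dsat_imp {P : Type} (s : DynOp P) (a b : DForm P) (M : PrefModel P) (w : M.W) :
    dsat s (a.imp b) M w ↔ (dsat s a M w → dsat s b M w) := by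
  simp only [DForm.imp, dsat]; tauto

lemma dsat_mu_toD {P : Type} (s : DynOp P) (φ : PForm P) (N : PrefModel P) (u : N.W) :
    dsat s (DForm.mu φ.toD) N u ↔ (psat N φ u ∧ ∀ v, N.lt v u → ¬ psat N φ v) := by
  simp [DForm.mu, DForm.diaLt, dsat, dsat_toD]

/-- the main combinatorial lemma : given the (contrapositives of the) strict-order
axioms instantiated at `¬ μφ`, the `≤`-minimal and `≤'`-minimal φ-worlds coincide. -/
lemma min_eq {P : Type} (s : DynOp P) (M : PrefModel P) (ψ φ : PForm P)
    (hsub : ∀ u : M.W, psat M φ u → psat M ψ u)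
    (ax2 : ∀ w : M.W, psat M ψ w → ∀ v, M.lt v w → psat M ψ v →
        (psat M φ v ∧ ∀ x, s.srel M ψ x v → ¬ psat M φ x) →
        ∃ u, s.srel M ψ u w ∧ (psat M φ u ∧ ∀ x, s.srel M ψ x u → ¬ psat M φ x))
    (ax4 : ∀ w : M.W, psat M ψ w → ∀ v, s.srel M ψ v w → psat M ψ v →
        (psat M φ v ∧ ∀ x, s.srel M ψ x v → ¬ psat M φ x) →
        ∃ u, M.lt u w ∧ (psat M φ u ∧ ∀ x, s.srel M ψ x u → ¬ psat M φ x)) :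
    ∀ w : M.W, (psat M φ w ∧ ∀ x, M.lt x w → ¬ psat M φ x) ↔
               (psat M φ w ∧ ∀ x, s.srel M ψ x w → ¬ psat M φ x) := by
  classical
  -- Claim 1 : ≤-minimal φ-worlds are ≤'-minimal.
  have claim1 : ∀ w : M.W, (psat M φ w ∧ ∀ x, M.lt x w → ¬ psat M φ x) →
      (psat M φ w ∧ ∀ x, s.srel M ψ x w → ¬ psat M φ x) := by
    intro w ⟨hφw, hmin⟩
    refine ⟨hφw, ?_⟩
    intro x hx hφx
    -- pick a <'-minimal element of S = {x | φ x ∧ x <' w}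
    obtain ⟨z, ⟨hφz, hzw⟩, hzmin⟩ :=
      (s.wf M ψ).has_min {x | psat M φ x ∧ s.srel M ψ x w} ⟨x, hφx, hx⟩
    have hm'z : psat M φ z ∧ ∀ y, s.srel M ψ y z → ¬ psat M φ y := by
      refine ⟨hφz, fun y hy hφy => ?_⟩
      have hyw : s.srel M ψ y w := by
        refine ⟨s.trans M ψ _ _ _ hy.1 hzw.1, fun hwy => hzw.2 (s.trans M ψ _ _ _ hwy hy.1)⟩
      exact hzmin y ⟨hφy, hyw⟩ hy
    obtain ⟨u, hlt, hφu, _⟩ := ax4 w (hsub w hφw) z hzw (hsub z hφz) hm'z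
    exact hmin u hlt hφu
  intro w
  constructor
  · exact claim1 w
  · -- Claim 2 : ≤'-minimal φ-worlds are ≤-minimal.
    intro ⟨hφw, hmin'⟩
    refine ⟨hφw, ?_⟩
    intro x hx hφx
    obtain ⟨z, ⟨hφz, hzw⟩, hzmin⟩ :=
      M.wf.has_min {x | psat M φ x ∧ M.lt x w} ⟨x, hφx, hx⟩
    have hmz : psat M φ z ∧ ∀ y, M.lt y z → ¬ psat M φ y := by
      refine ⟨hφz, fun y hy hφy => ?_⟩
      have hyw : M.lt y w := by
        refine ⟨M.trans _ _ _ hy.1 hzw.1, fun hwy => hzw.2 (M.trans _ _ _ hwy hy.1)⟩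
      exact hzmin y ⟨hφy, hyw⟩ hy
    have hm'z := claim1 z hmz
    obtain ⟨u, hsu, hφu, _⟩ := ax2 w (hsub w hφw) z hzw (hsub z hφz) hm'z
    exact hmin' u hsu hφu

theorem dp1_axioms_preserve_conditional_beliefs {P : Type}
    (𝔐 : Set (PrefModel P)) (s : DynOp P) (hclosed : ClosedOver s 𝔐)
    (hax : ∀ (ψ : PForm P) (ξ : DForm P), ∀ M ∈ 𝔐, ∀ w : M.W,
      dsat s ((DForm.dyn ψ (.boxLe ξ)).imp
        (ψ.toD.imp (.boxLe (ψ.toD.imp (.dyn ψ ξ))))) M w ∧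
      dsat s ((DForm.dyn ψ (.boxLt ξ)).imp
        (ψ.toD.imp (.boxLt (ψ.toD.imp (.dyn ψ ξ))))) M w ∧
      dsat s ((DForm.boxLe (.dyn ψ ξ)).imp
        (ψ.toD.imp (.dyn ψ (.boxLe (ψ.toD.imp ξ))))) M w ∧
      dsat s ((DForm.boxLt (.dyn ψ ξ)).imp
        (ψ.toD.imp (.dyn ψ (.boxLt (ψ.toD.imp ξ))))) M w)
    (φ ψ : PForm P)
    (himp : ∀ M ∈ 𝔐, ∀ w : M.W, dsat s (φ.toD.imp ψ.toD) M w)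
    (ξ : DForm P) :
    ∀ M ∈ 𝔐, ∀ w : M.W,
      dsat s ((DForm.dyn ψ (DForm.bel ξ φ.toD)).iff
        (DForm.bel (DForm.dyn ψ ξ) φ.toD)) M w := by
  classical
  intro M hM w
  have hsub : ∀ u : M.W, psat M φ u → psat M ψ u := by
    intro u hu
    have h := (dsat_imp s _ _ M u).mp (himp M hM u)
    exact (dsat_toD s ψ M u).mp (h ((dsat_toD s φ M u).mpr hu))
  -- unpack the axioms instantiated at ξ := ¬ μφ
  have ax2 : ∀ w' : M.W, psat M ψ w' → ∀ v, M.lt v w' → psat M ψ v →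
      (psat M φ v ∧ ∀ x, s.srel M ψ x v → ¬ psat M φ x) →
      ∃ u, s.srel M ψ u w' ∧ (psat M φ u ∧ ∀ x, s.srel M ψ x u → ¬ psat M φ x) := by
    intro w' hψw' v hvw' hψv hm'v
    have h2 := (dsat_imp s _ _ M w').mp (hax ψ (.neg (DForm.mu φ.toD)) M hM w').2.1
    by_contra hcon
    push_neg at hcon
    have hante : dsat s (DForm.dyn ψ (.boxLt (.neg (DForm.mu φ.toD)))) M w' := by
      show ∀ u, (s.apply M ψ).lt u w' → ¬ dsat s (DForm.mu φ.toD) (s.apply M ψ) u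
      intro u hu hmu
      rw [dsat_mu_toD] at hmu
      have hmu' : psat M φ u ∧ ∀ x, s.srel M ψ x u → ¬ psat M φ x := by
        refine ⟨(psat_apply s M ψ φ u).mp hmu.1, fun x hx hφx => ?_⟩
        exact hmu.2 x hx ((psat_apply s M ψ φ x).mpr hφx)
      obtain ⟨x, hx, hφx⟩ := hcon u hu hmu'.1
      exact hmu'.2 x hx hφx
    have h3 := (dsat_imp s _ _ M w').mp (h2 hante) ((dsat_toD s ψ M w').mpr hψw')
    have h4 := h3 v hvw'
    have h5 := (dsat_imp s _ _ M v).mp h4 ((dsat_toD s ψ M v).mpr hψv)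
    apply h5
    refine (dsat_mu_toD s φ (s.apply M ψ) v).mpr ?_
    refine ⟨(psat_apply s M ψ φ v).mpr hm'v.1, fun x hx hφx => ?_⟩
    exact hm'v.2 x hx ((psat_apply s M ψ φ x).mp hφx)
  have ax4 : ∀ w' : M.W, psat M ψ w' → ∀ v, s.srel M ψ v w' → psat M ψ v →
      (psat M φ v ∧ ∀ x, s.srel M ψ x v → ¬ psat M φ x) →
      ∃ u, M.lt u w' ∧ (psat M φ u ∧ ∀ x, s.srel M ψ x u → ¬ psat M φ x) := by
    intro w' hψw' v hvw' hψv hm'v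
    have h2 := (dsat_imp s _ _ M w').mp (hax ψ (.neg (DForm.mu φ.toD)) M hM w').2.2.2
    by_contra hcon
    push_neg at hcon
    have hante : dsat s (DForm.boxLt (.dyn ψ (.neg (DForm.mu φ.toD)))) M w' := by
      show ∀ u, M.lt u w' → ¬ dsat s (DForm.mu φ.toD) (s.apply M ψ) u
      intro u hu hmu
      replace hmu := (dsat_mu_toD s φ (s.apply M ψ) u).mp hmu
      have hmu' : psat M φ u ∧ ∀ x, s.srel M ψ x u → ¬ psat M φ x := by
        refine ⟨(psat_apply s M ψ φ u).mp hmu.1, fun x hx hφx => ?_⟩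
        exact hmu.2 x hx ((psat_apply s M ψ φ x).mpr hφx)
      obtain ⟨x, hx, hφx⟩ := hcon u hu hmu'.1
      exact hmu'.2 x hx hφx
    have h3 := (dsat_imp s _ _ M w').mp (h2 hante) ((dsat_toD s ψ M w').mpr hψw')
    have h4 := h3 v hvw'
    have h5 := (dsat_imp s _ _ (s.apply M ψ) v).mp h4
      ((dsat_toD s ψ (s.apply M ψ) v).mpr ((psat_apply s M ψ ψ v).mpr hψv))
    apply h5
    refine (dsat_mu_toD s φ (s.apply M ψ) v).mpr ?_
    refine ⟨(psat_apply s M ψ φ v).mpr hm'v.1, fun x hx hφx => ?_⟩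
    exact hm'v.2 x hx ((psat_apply s M ψ φ x).mp hφx)
  have hmin := min_eq s M ψ φ hsub ax2 ax4
  -- now the goal
  have lhs_iff : dsat s (DForm.dyn ψ (DForm.bel ξ φ.toD)) M w ↔
      ∀ u : M.W, (psat M φ u ∧ ∀ x, s.srel M ψ x u → ¬ psat M φ x) →
        dsat s ξ (s.apply M ψ) u := by
    show (∀ u, dsat s ((DForm.mu φ.toD).imp ξ) (s.apply M ψ) u) ↔ _
    apply forall_congr'
    intro u
    rw [dsat_imp, dsat_mu_toD]
    constructor
    · intro h hm
      exact h ⟨(psat_apply s M ψ φ u).mpr hm.1,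
        fun x hx hφx => hm.2 x hx ((psat_apply s M ψ φ x).mp hφx)⟩
    · intro h hm
      exact h ⟨(psat_apply s M ψ φ u).mp hm.1,
        fun x hx hφx => hm.2 x hx ((psat_apply s M ψ φ x).mpr hφx)⟩
  have rhs_iff : dsat s (DForm.bel (DForm.dyn ψ ξ) φ.toD) M w ↔
      ∀ u : M.W, (psat M φ u ∧ ∀ x, M.lt x u → ¬ psat M φ x) →
        dsat s ξ (s.apply M ψ) u := by
    show (∀ u, dsat s ((DForm.mu φ.toD).imp (.dyn ψ ξ)) M u) ↔ _
    apply forall_congr'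
    intro u
    rw [dsat_imp, dsat_mu_toD]
    exact Iff.rfl
  show dsat s ((DForm.dyn ψ (DForm.bel ξ φ.toD)).imp (DForm.bel (DForm.dyn ψ ξ) φ.toD)) M w ∧
       dsat s ((DForm.bel (DForm.dyn ψ ξ) φ.toD).imp (DForm.dyn ψ (DForm.bel ξ φ.toD))) M w
  constructor
  · rw [dsat_imp, lhs_iff, rhs_iff]
    intro h u hu
    exact h u ((hmin u).mp hu)
  · rw [dsat_imp, lhs_iff, rhs_iff]
    intro h u hu
    exact h u ((hmin u).mpr hu)
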